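/- arXiv:2006.05463 — 2 statements merged into one kernel-verified Lean document; each statement's English description precedes it below -/
import Mathlib

section
/- The axiom system E_v is sound for verdict equivalence: for all (open) monitors m, n, if E_v ⊢ m = n then σ(m) ≃ σ(n) for every closed substitution σ. -/
/-- Recursion-free regular monitors (with variables). -/
inductive Mon (Act : Type) : Type
  | end_ : Mon Act
  | yes : Mon Act
  | no : Mon Act
  | act : Act → Mon Act → Mon Act
  | plus : Mon Act → Mon Act → Mon Act
  | var : ℕ → Mon Act

variable {Act : Type}

/-- Verdicts: `end`, `yes`, `no`. -/
inductive IsVerdict : Mon Act → Prop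
  | end_ : IsVerdict Mon.end_
  | yes : IsVerdict Mon.yes
  | no : IsVerdict Mon.no

/-- Labelled transition relation; `none` is the silent action τ. -/
inductive Step : Mon Act → Option Act → Mon Act → Prop
  | act (a : Act) (m : Mon Act) : Step (Mon.act a m) (some a) m
  | plusL {m n m' : Mon Act} {α : Option Act} : Step m α m' → Step (Mon.plus m n) α m'
  | plusR {m n n' : Mon Act} {α : Option Act} : Step n α n' → Step (Mon.plus m n) α n'
  | verdict {v : Mon Act} {α : Option Act} : IsVerdict v → Step v α v

/-- Reflexive-transitive closure of τ-steps. -/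
def TauStar (m n : Mon Act) : Prop :=
  Relation.ReflTransGen (fun p q => Step p none q) m n

/-- Strong transition along a finite trace. -/
inductive Trace : Mon Act → List Act → Mon Act → Prop
  | refl (m : Mon Act) : Trace m [] m
  | cons {m m' m'' : Mon Act} {a : Act} {s : List Act} :
      Step m (some a) m' → Trace m' s m'' → Trace m (a :: s) m''

/-- Weak transition along a finite trace (τ-steps allowed throughout). -/
inductive WTrace : Mon Act → List Act → Mon Act → Prop
  | nil {m m' : Mon Act} : TauStar m m' → WTrace m [] m'
  | cons {m m₁ m₂ m' : Mon Act} {a : Act} {s : List Act} :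
      TauStar m m₁ → Step m₁ (some a) m₂ → WTrace m₂ s m' → WTrace m (a :: s) m'

/-- Acceptance language. -/
def La (m : Mon Act) : Set (List Act) := {s | WTrace m s Mon.yes}

/-- Rejection language. -/
def Lr (m : Mon Act) : Set (List Act) := {s | WTrace m s Mon.no}

/-- Verdict equivalence. -/
def VerdEq (m n : Mon Act) : Prop := La m = La n ∧ Lr m = Lr n

/-- `A · Act^ω`: infinite words having a finite prefix in `A`. -/
def omegaCl (A : Set (List Act)) : Set (ℕ → Act) :=
  {w | ∃ n : ℕ, (List.range n).map w ∈ A}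

/-- ω-verdict equivalence. -/
def OmegaEq (m n : Mon Act) : Prop :=
  omegaCl (La m) = omegaCl (La n) ∧ omegaCl (Lr m) = omegaCl (Lr n)

/-- Closed monitors: no variables. -/
def Closed : Mon Act → Prop
  | Mon.act _ m => Closed m
  | Mon.plus m n => Closed m ∧ Closed n
  | Mon.var _ => False
  | _ => True

/-- `yes` occurs as a subterm. -/
def HasYes : Mon Act → Prop
  | Mon.yes => True
  | Mon.act _ m => HasYes m
  | Mon.plus m n => HasYes m ∨ HasYes n
  | _ => False

/-- `no` occurs as a subterm. -/
def HasNo : Mon Act → Prop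
  | Mon.no => True
  | Mon.act _ m => HasNo m
  | Mon.plus m n => HasNo m ∨ HasNo n
  | _ => False

/-- Syntactic depth. -/
def depth : Mon Act → ℕ
  | Mon.act _ m => depth m + 1
  | Mon.plus m n => max (depth m) (depth n)
  | _ => 0

/-- Applying a substitution. -/
def msubst (σ : ℕ → Mon Act) : Mon Act → Mon Act
  | Mon.var x => σ x
  | Mon.act a m => Mon.act a (msubst σ m)
  | Mon.plus m n => Mon.plus (msubst σ m) (msubst σ n)
  | m => m

/-- Equational derivability from an axiom set `E`. -/
inductive Deriv (E : Mon Act → Mon Act → Prop) : Mon Act → Mon Act → Prop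
  | ax {m n} : E m n → Deriv E m n
  | refl (m) : Deriv E m m
  | symm {m n} : Deriv E m n → Deriv E n m
  | trans {m n p} : Deriv E m n → Deriv E n p → Deriv E m p
  | act (a : Act) {m n} : Deriv E m n → Deriv E (Mon.act a m) (Mon.act a n)
  | plus {m m' n n'} : Deriv E m m' → Deriv E n n' → Deriv E (Mon.plus m n) (Mon.plus m' n')
  | subst (σ : ℕ → Mon Act) {m n} : Deriv E m n → Deriv E (msubst σ m) (msubst σ n)

def vx : Mon Act := Mon.var 0
def vy : Mon Act := Mon.var 1
def vz : Mon Act := Mon.var 2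

/-- The axiom system `E_v`. -/
inductive EvAx : Mon Act → Mon Act → Prop
  | A1 : EvAx (Mon.plus vx vy) (Mon.plus vy vx)
  | A2 : EvAx (Mon.plus vx (Mon.plus vy vz)) (Mon.plus (Mon.plus vx vy) vz)
  | A3 : EvAx (Mon.plus vx vx) vx
  | A4 : EvAx (Mon.plus vx Mon.end_) vx
  | Ea (a : Act) : EvAx (Mon.act a Mon.end_) Mon.end_
  | Ya (a : Act) : EvAx Mon.yes (Mon.plus Mon.yes (Mon.act a Mon.yes))
  | Na (a : Act) : EvAx Mon.no (Mon.plus Mon.no (Mon.act a Mon.no))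
  | Da (a : Act) : EvAx (Mon.act a (Mon.plus vx vy)) (Mon.plus (Mon.act a vx) (Mon.act a vy))

/-- Sum of a list of monitors (`end` for the empty sum). -/
def sumList : List (Mon Act) → Mon Act
  | [] => Mon.end_
  | [m] => m
  | m :: ms => Mon.plus m (sumList ms)

/-- `s.m`: the monitor performing exactly the actions of `s` and then behaving as `m`. -/
def prefixMon (s : List Act) (m : Mon Act) : Mon Act :=
  List.foldr Mon.act m s

/-- Build `Σ_{(a,m)∈l} a.m [+ yes] [+ no]`. -/
def buildNF (l : List (Act × Mon Act)) (hy hn : Bool) : Mon Act :=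
  sumList (l.map (fun p => Mon.act p.1 p.2) ++
    (if hy then [Mon.yes] else []) ++ (if hn then [Mon.no] else []))

/-- Normal forms for closed monitors. -/
inductive NF : Mon Act → Prop
  | mk (l : List (Act × Mon Act)) (hy hn : Bool) :
      (l.map Prod.fst).Nodup →
      (∀ p ∈ l, p.2 ≠ Mon.end_) →
      (∀ p ∈ l, NF p.2) →
      NF (buildNF l hy hn)

/-- Build `Σ_{(a,m)∈l} a.m + Σ_{x∈vs} x [+ yes] [+ no]`. -/
def buildONF (l : List (Act × Mon Act)) (vs : List ℕ) (hy hn : Bool) : Mon Act :=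
  sumList (l.map (fun p => Mon.act p.1 p.2) ++ vs.map Mon.var ++
    (if hy then [Mon.yes] else []) ++ (if hn then [Mon.no] else []))

/-- Open normal forms. -/
inductive ONF : Mon Act → Prop
  | mk (l : List (Act × Mon Act)) (vs : List ℕ) (hy hn : Bool) :
      (l.map Prod.fst).Nodup → vs.Nodup →
      (∀ p ∈ l, p.2 ≠ Mon.end_) →
      (∀ p ∈ l, ONF p.2) →
      ONF (buildONF l vs hy hn)

/-- `s^i`: the `i`-fold concatenation of `s`. -/
def spow (s : List Act) (i : ℕ) : List Act := (List.replicate i s).flatten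

/-- All traces of length exactly `n` over the alphabet listed by `L`. -/
def tuples (L : List Act) : ℕ → List (List Act)
  | 0 => [[]]
  | n + 1 => (tuples L n).flatMap (fun t => L.map (fun a => a :: t))

/-- All traces of length at most `n`. -/
def allUpTo (L : List Act) (n : ℕ) : List (List Act) :=
  (List.range (n + 1)).flatMap (tuples L)

/-- `s̄^≤(m)`: sum of `s'.m` over traces `s'` with `|s'| ≤ |s|` that are not prefixes of `s`. -/
def sbarLe [DecidableEq Act] (L : List Act) (s : List Act) (m : Mon Act) : Mon Act :=
  sumList (((allUpTo L s.length).filter (fun t => !(t.isPrefixOf s))).map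
    (fun t => prefixMon t m))

/-- `s̄(m) = s̄^≤(m) + s.Σ_{a∈Act} a.m`. -/
def sbar [DecidableEq Act] (L : List Act) (s : List Act) (m : Mon Act) : Mon Act :=
  Mon.plus (sbarLe L s m) (prefixMon s (sumList (L.map fun a => Mon.act a m)))

/-- `s̄^(k)(m)`. -/
def sbarK [DecidableEq Act] (L : List Act) (s : List Act) (m : Mon Act) : ℕ → Mon Act
  | 0 => sbar L s m
  | 1 => sbar L s m
  | k + 2 =>
      Mon.plus
        (sumList ((List.range k).map (fun i => prefixMon (spow s (i + 1)) (sbarLe L s m))))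
        (prefixMon (spow s (k + 1)) (sbar L s m))

section Aux

lemma step_verdict_eq {v : Mon Act} {α : Option Act} {p : Mon Act}
    (hv : IsVerdict v) (h : Step v α p) : p = v := by
  cases h with
  | verdict => rfl
  | act => cases hv
  | plusL => cases hv
  | plusR => cases hv

lemma wtrace_verdict_eq {v : Mon Act} {s : List Act} {p : Mon Act}
    (hv : IsVerdict v) (h : WTrace v s p) : p = v := by
  have tau : ∀ {q : Mon Act}, TauStar v q → q = v := by
    intro q h
    induction h with
    | refl => rfl
    | tail _ hs ih => subst ih; exact step_verdict_eq hv hs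
  have gen : ∀ {m s p}, WTrace m s p → m = v → p = v := by
    intro m s p h
    induction h with
    | nil ht => rintro rfl; exact tau ht
    | cons ht hs _ ih =>
      rintro rfl
      have h1 := tau ht
      subst h1
      have h2 := step_verdict_eq hv hs
      exact ih h2
  exact gen h rfl

lemma wtrace_self {v : Mon Act} (hv : IsVerdict v) (s : List Act) : WTrace v s v := by
  induction s with
  | nil => exact WTrace.nil Relation.ReflTransGen.refl
  | cons a s ih =>
      exact WTrace.cons Relation.ReflTransGen.refl (Step.verdict hv) ih

lemma verdict_ne_plus {v m n : Mon Act} (hv : IsVerdict v) : v ≠ Mon.plus m n := by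
  cases hv <;> simp

lemma verdict_ne_act {v : Mon Act} {a : Act} {m : Mon Act} (hv : IsVerdict v) :
    v ≠ Mon.act a m := by
  cases hv <;> simp

lemma step_plus {m n p : Mon Act} {α : Option Act} (h : Step (Mon.plus m n) α p) :
    Step m α p ∨ Step n α p := by
  cases h with
  | plusL h => exact Or.inl h
  | plusR h => exact Or.inr h
  | verdict hv => cases hv

lemma step_act {a : Act} {m p : Mon Act} {α : Option Act} (h : Step (Mon.act a m) α p) :
    α = some a ∧ p = m := by
  cases h with
  | act => exact ⟨rfl, rfl⟩
  | verdict hv => cases hv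

lemma wtrace_plus_left {m n p : Mon Act} {s : List Act} (hp : IsVerdict p)
    (h : WTrace m s p) : WTrace (Mon.plus m n) s p := by
  cases h with
  | nil h =>
    rcases h.cases_head with rfl | ⟨q, hs, ht⟩
    · exact WTrace.nil (Relation.ReflTransGen.single (Step.plusL (Step.verdict hp)))
    · exact WTrace.nil (Relation.ReflTransGen.head (Step.plusL hs) ht)
  | cons ht hs hw =>
    rcases ht.cases_head with rfl | ⟨q, h1, h2⟩
    · exact WTrace.cons Relation.ReflTransGen.refl (Step.plusL hs) hw
    · exact WTrace.cons (Relation.ReflTransGen.head (Step.plusL h1) h2) hs hw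

lemma wtrace_plus_right {m n p : Mon Act} {s : List Act} (hp : IsVerdict p)
    (h : WTrace n s p) : WTrace (Mon.plus m n) s p := by
  cases h with
  | nil h =>
    rcases h.cases_head with rfl | ⟨q, hs, ht⟩
    · exact WTrace.nil (Relation.ReflTransGen.single (Step.plusR (Step.verdict hp)))
    · exact WTrace.nil (Relation.ReflTransGen.head (Step.plusR hs) ht)
  | cons ht hs hw =>
    rcases ht.cases_head with rfl | ⟨q, h1, h2⟩
    · exact WTrace.cons Relation.ReflTransGen.refl (Step.plusR hs) hw
    · exact WTrace.cons (Relation.ReflTransGen.head (Step.plusR h1) h2) hs hw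

lemma wtrace_plus_iff {m n p : Mon Act} {s : List Act} (hp : IsVerdict p) :
    WTrace (Mon.plus m n) s p ↔ WTrace m s p ∨ WTrace n s p := by
  constructor
  · intro h
    cases h with
    | nil h =>
      rcases h.cases_head with h' | ⟨q, hs, ht⟩
      · exact absurd h'.symm (verdict_ne_plus hp)
      · rcases step_plus hs with h1 | h1
        · exact Or.inl (WTrace.nil (Relation.ReflTransGen.head h1 ht))
        · exact Or.inr (WTrace.nil (Relation.ReflTransGen.head h1 ht))
    | cons ht hs hw =>
      rcases ht.cases_head with rfl | ⟨q, h1, h2⟩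
      · rcases step_plus hs with h1 | h1
        · exact Or.inl (WTrace.cons Relation.ReflTransGen.refl h1 hw)
        · exact Or.inr (WTrace.cons Relation.ReflTransGen.refl h1 hw)
      · rcases step_plus h1 with h3 | h3
        · exact Or.inl (WTrace.cons (Relation.ReflTransGen.head h3 h2) hs hw)
        · exact Or.inr (WTrace.cons (Relation.ReflTransGen.head h3 h2) hs hw)
  · rintro (h | h)
    · exact wtrace_plus_left hp h
    · exact wtrace_plus_right hp h

lemma tauStar_act {a : Act} {m q : Mon Act} (h : TauStar (Mon.act a m) q) :
    q = Mon.act a m := by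
  rcases h.cases_head with rfl | ⟨r, hs, _⟩
  · rfl
  · rcases step_act hs with ⟨h1, _⟩; cases h1

lemma wtrace_act_iff {a : Act} {m p : Mon Act} {s : List Act} (hp : IsVerdict p) :
    WTrace (Mon.act a m) s p ↔ ∃ s', s = a :: s' ∧ WTrace m s' p := by
  constructor
  · intro h
    cases h with
    | nil h => exact absurd (tauStar_act h) (verdict_ne_act hp)
    | cons ht hs hw =>
      have := tauStar_act ht
      subst this
      rcases step_act hs with ⟨h1, rfl⟩
      cases h1
      exact ⟨_, rfl, hw⟩
  · rintro ⟨s', rfl, h⟩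
    exact WTrace.cons Relation.ReflTransGen.refl (Step.act a m) h

lemma msubst_msubst (σ τ : ℕ → Mon Act) (m : Mon Act) :
    msubst σ (msubst τ m) = msubst (fun x => msubst σ (τ x)) m := by
  induction m with
  | end_ => rfl
  | yes => rfl
  | no => rfl
  | var x => rfl
  | act a m ih => simp [msubst, ih]
  | plus m n ihm ihn => simp [msubst, ihm, ihn]

/-- The generic verdict-reachability language. -/
def Lgen (p m : Mon Act) : Set (List Act) := {s | WTrace m s p}

lemma Lgen_plus {p : Mon Act} (hp : IsVerdict p) (m n : Mon Act) :
    Lgen p (Mon.plus m n) = Lgen p m ∪ Lgen p n := by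
  ext s; exact wtrace_plus_iff hp

lemma Lgen_act {p : Mon Act} (hp : IsVerdict p) (a : Act) (m : Mon Act) :
    Lgen p (Mon.act a m) = (fun s => a :: s) '' Lgen p m := by
  ext s
  rw [Set.mem_image]
  constructor
  · intro h
    rcases (wtrace_act_iff hp).1 h with ⟨s', rfl, hw⟩
    exact ⟨s', hw, rfl⟩
  · rintro ⟨s', h, rfl⟩
    exact (wtrace_act_iff hp).2 ⟨s', rfl, h⟩

lemma Lgen_end {p : Mon Act} (hp : IsVerdict p) (hne : p ≠ Mon.end_) :
    Lgen p (Mon.end_ : Mon Act) = ∅ := by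
  ext s
  simp only [Set.mem_empty_iff_false, iff_false]
  intro h
  exact hne (wtrace_verdict_eq IsVerdict.end_ h)

lemma Lgen_self {p : Mon Act} (hp : IsVerdict p) : Lgen p p = Set.univ := by
  ext s; simpa [Lgen] using wtrace_self hp s

lemma Lgen_other {p v : Mon Act} (hv : IsVerdict v) (hne : p ≠ v) :
    Lgen p v = ∅ := by
  ext s
  simp only [Set.mem_empty_iff_false, iff_false]
  intro h
  exact hne (wtrace_verdict_eq hv h)

lemma Lgen_ax {p a b : Mon Act} (hp : IsVerdict p) (hpe : p ≠ Mon.end_) (h : EvAx a b) (σ : ℕ → Mon Act) :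
    Lgen p (msubst σ a) = Lgen p (msubst σ b) := by
  cases h with
  | A1 =>
    simp only [msubst, vx, vy, Lgen_plus hp]
    exact Set.union_comm _ _
  | A2 =>
    simp only [msubst, vx, vy, vz, Lgen_plus hp]
    exact (Set.union_assoc _ _ _).symm
  | A3 =>
    simp only [msubst, vx, Lgen_plus hp]
    exact Set.union_self _
  | A4 =>
    simp only [msubst, vx, Lgen_plus hp, Lgen_end hp hpe]
    simp
  | Ea a =>
    simp only [msubst, Lgen_act hp, Lgen_end hp hpe]
    simp
  | Ya a =>
    simp only [msubst, Lgen_plus hp, Lgen_act hp]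
    rcases hp with _ | _ | _
    · exact absurd rfl hpe
    · rw [Lgen_self IsVerdict.yes]; simp
    · rw [Lgen_other IsVerdict.yes (by simp)]; simp
  | Na a =>
    simp only [msubst, Lgen_plus hp, Lgen_act hp]
    rcases hp with _ | _ | _
    · exact absurd rfl hpe
    · rw [Lgen_other IsVerdict.no (by simp)]; simp
    · rw [Lgen_self IsVerdict.no]; simp
  | Da a =>
    simp only [msubst, vx, vy, Lgen_plus hp, Lgen_act hp]
    exact Set.image_union _ _ _

lemma Lgen_sound {p : Mon Act} (hp : IsVerdict p) (hpe : p ≠ Mon.end_) {m n : Mon Act}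
    (h : Deriv EvAx m n) : ∀ σ : ℕ → Mon Act, Lgen p (msubst σ m) = Lgen p (msubst σ n) := by
  induction h with
  | ax h => exact fun σ => Lgen_ax hp hpe h σ
  | refl m => exact fun σ => rfl
  | symm _ ih => exact fun σ => (ih σ).symm
  | trans _ _ ih1 ih2 => exact fun σ => (ih1 σ).trans (ih2 σ)
  | act a _ ih =>
      intro σ
      simp only [msubst, Lgen_act hp, ih σ]
  | plus _ _ ih1 ih2 =>
      intro σ
      simp only [msubst, Lgen_plus hp, ih1 σ, ih2 σ]
  | subst τ _ ih =>
      intro σ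
      rw [msubst_msubst, msubst_msubst]
      exact ih _

end Aux

/-- soundness of `E_v` with respect to verdict equivalence. -/
theorem stmt13 (m n : Mon Act) (h : Deriv EvAx m n)
    (σ : ℕ → Mon Act) (hσ : ∀ v, Closed (σ v)) :
    VerdEq (msubst σ m) (msubst σ n) := by
  exact ⟨Lgen_sound IsVerdict.yes (by simp) h σ, Lgen_sound IsVerdict.no (by simp) h σ⟩
end

section
/- For a closed monitor m and a finite trace s: if m ⇒^s yes then E_v ⊢ m = m + s.yes, and if m ⇒^s no then E_v ⊢ m = m + s.no, where s.v denotes the monitor prefixing the verdict v by the actions of s. -/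
variable {Act : Type}

section Aux

lemma dcomm (m n : Mon Act) : Deriv EvAx (Mon.plus m n) (Mon.plus n m) :=
  Deriv.subst (fun i => if i = 0 then m else n) (Deriv.ax EvAx.A1)

lemma dassoc (m n p : Mon Act) :
    Deriv EvAx (Mon.plus m (Mon.plus n p)) (Mon.plus (Mon.plus m n) p) :=
  Deriv.subst (fun i => if i = 0 then m else if i = 1 then n else p) (Deriv.ax EvAx.A2)

lemma didem (m : Mon Act) : Deriv EvAx (Mon.plus m m) m :=
  Deriv.subst (fun _ => m) (Deriv.ax EvAx.A3)

lemma dDa (a : Act) (m n : Mon Act) :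
    Deriv EvAx (Mon.act a (Mon.plus m n)) (Mon.plus (Mon.act a m) (Mon.act a n)) :=
  Deriv.subst (fun i => if i = 0 then m else n) (Deriv.ax (EvAx.Da a))

/-- Verdicts absorb `a.v`. -/
lemma verdict_absorb {v : Mon Act} (hv : IsVerdict v) (a : Act) :
    Deriv EvAx v (Mon.plus v (Mon.act a v)) := by
  cases hv with
  | yes => exact Deriv.ax (EvAx.Ya a)
  | no => exact Deriv.ax (EvAx.Na a)
  | end_ =>
    have h1 : Deriv EvAx (Mon.act a Mon.end_) Mon.end_ := Deriv.ax (EvAx.Ea a)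
    exact Deriv.trans (Deriv.symm (didem _))
      (Deriv.plus (Deriv.refl _) (Deriv.symm h1))

/-- If `Deriv m (m + c)` then `Deriv (m + n) ((m + n) + c)`. -/
lemma plus_absorb_left {m c : Mon Act} (n : Mon Act)
    (h : Deriv EvAx m (Mon.plus m c)) :
    Deriv EvAx (Mon.plus m n) (Mon.plus (Mon.plus m n) c) := by
  have h1 : Deriv EvAx (Mon.plus m n) (Mon.plus (Mon.plus m c) n) :=
    Deriv.plus h (Deriv.refl n)
  have h2 : Deriv EvAx (Mon.plus (Mon.plus m c) n) (Mon.plus m (Mon.plus c n)) :=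
    Deriv.symm (dassoc _ _ _)
  have h3 : Deriv EvAx (Mon.plus m (Mon.plus c n)) (Mon.plus m (Mon.plus n c)) :=
    Deriv.plus (Deriv.refl m) (dcomm c n)
  have h4 : Deriv EvAx (Mon.plus m (Mon.plus n c)) (Mon.plus (Mon.plus m n) c) :=
    dassoc _ _ _
  exact h1.trans (h2.trans (h3.trans h4))

lemma plus_absorb_right {n c : Mon Act} (m : Mon Act)
    (h : Deriv EvAx n (Mon.plus n c)) :
    Deriv EvAx (Mon.plus m n) (Mon.plus (Mon.plus m n) c) := by
  have h1 := plus_absorb_left (c := c) m h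
  have hc := dcomm m n
  exact hc.trans (h1.trans (Deriv.plus (dcomm n m) (Deriv.refl c)))

/-- Auxiliary fact: if `m →a n` then `E ⊢ m = m + a.n`. -/
lemma step_absorb {m n : Mon Act} {a : Act} (h : Step m (some a) n) :
    Deriv EvAx m (Mon.plus m (Mon.act a n)) := by
  generalize hα : (some a : Option Act) = α at h
  induction h with
  | act b p => cases hα; exact Deriv.symm (didem _)
  | plusL h ih => exact plus_absorb_left _ (ih hα)
  | plusR h ih => exact plus_absorb_right _ (ih hα)
  | verdict hv => cases hα; exact verdict_absorb hv a

/-- If `m →τ n` then `E ⊢ m = m + n`. -/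
lemma tau_absorb {m n : Mon Act} (h : Step m none n) :
    Deriv EvAx m (Mon.plus m n) := by
  generalize hα : (none : Option Act) = α at h
  induction h with
  | act b p => cases hα
  | plusL h ih => exact plus_absorb_left _ (ih hα)
  | plusR h ih => exact plus_absorb_right _ (ih hα)
  | verdict hv => exact Deriv.symm (didem _)

lemma taustar_absorb {m n : Mon Act} (h : TauStar m n) :
    Deriv EvAx m (Mon.plus m n) := by
  induction h using Relation.ReflTransGen.head_induction_on with
  | refl => exact Deriv.symm (didem _)
  | head hs _ ih =>
    have h1 := tau_absorb hs
    exact h1.trans ((plus_absorb_right _ ih).trans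
      (Deriv.plus (Deriv.symm h1) (Deriv.refl n)))

lemma wtrace_absorb {m n : Mon Act} {s : List Act} (h : WTrace m s n) :
    Deriv EvAx m (Mon.plus m (prefixMon s n)) := by
  induction h with
  | nil ht => exact taustar_absorb ht
  | @cons m m₁ m₂ m' a s ht hs _ ih =>
    have h1 : Deriv EvAx m (Mon.plus m m₁) := taustar_absorb ht
    have h2 : Deriv EvAx m₁ (Mon.plus m₁ (Mon.act a m₂)) := step_absorb hs
    -- m = m + a.m₂
    have h3 : Deriv EvAx m (Mon.plus m (Mon.act a m₂)) :=
      h1.trans ((plus_absorb_right m h2).trans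
        (Deriv.plus (Deriv.symm h1) (Deriv.refl _)))
    -- a.m₂ = a.m₂ + a.(s.m')
    have h4 : Deriv EvAx (Mon.act a m₂)
        (Mon.plus (Mon.act a m₂) (Mon.act a (prefixMon s m'))) :=
      (Deriv.act a ih).trans (dDa a m₂ (prefixMon s m'))
    have h5 : Deriv EvAx m (Mon.plus m (Mon.act a (prefixMon s m'))) :=
      h3.trans ((plus_absorb_right m h4).trans
        (Deriv.plus (Deriv.symm h3) (Deriv.refl _)))
    exact h5

end Aux

/-- accepted/rejected traces can be made into explicit summands. -/
theorem stmt15 (m : Mon Act) (hm : Closed m) (s : List Act) :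
    (WTrace m s Mon.yes → Deriv EvAx m (Mon.plus m (prefixMon s Mon.yes))) ∧
    (WTrace m s Mon.no → Deriv EvAx m (Mon.plus m (prefixMon s Mon.no))) := by
  exact ⟨fun h => wtrace_absorb h, fun h => wtrace_absorb h⟩
end
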